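/- Let A be an n×n Hermitian matrix and P a unitary matrix commuting with A, sharing an orthonormal eigenbasis z₁,…,zₙ with ⟨a|zₖ⟩ ≠ 0 for all k (where a is a fixed index). If exp(−itA)|a⟩ = γ P|a⟩ for some real t and unimodular γ, then exp(−itA) = γ' P for some unimodular γ'. -/

import Mathlib

open Matrix BigOperators

theorem pst_implies_scaled_permutation (n : ℕ) (A P : Matrix (Fin n) (Fin n) ℂ)
    (hA : A.IsHermitian) (hP : P * Pᴴ = 1) (hcomm : A * P = P * A)
    (z : Fin n → (Fin n → ℂ)) (lam : Fin n → ℝ) (μ : Fin n → ℂ)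
    (horth : ∀ k l, ∑ i, (starRingEnd ℂ) (z k i) * z l i = if k = l then 1 else 0)
    (heigA : ∀ k, A.mulVec (z k) = ((lam k : ℂ)) • z k)
    (heigP : ∀ k, P.mulVec (z k) = μ k • z k)
    (hμ : ∀ k, ‖μ k‖ = 1)
    (a : Fin n) (hsupp : ∀ k, z k a ≠ 0)
    (t : ℝ) (γ : ℂ) (hγ : ‖γ‖ = 1)
    (hpst : (NormedSpace.exp ((-(Complex.I * (t : ℂ))) • A)).mulVec (Pi.single a 1)
      = γ • P.mulVec (Pi.single a 1)) :
    ∃ γ' : ℂ, ‖γ'‖ = 1 ∧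
      NormedSpace.exp ((-(Complex.I * (t : ℂ))) • A) = γ' • P := by
  classical
  set U : Matrix (Fin n) (Fin n) ℂ := Matrix.of (fun i k => z k i) with hUdef
  have hUU : Uᴴ * U = 1 := by
    ext k l
    simpa [Matrix.mul_apply, Matrix.conjTranspose_apply, Matrix.one_apply, hUdef]
      using horth k l
  have hUU' : U * Uᴴ = 1 := mul_eq_one_comm.mp hUU
  -- the unit
  let Uu : (Matrix (Fin n) (Fin n) ℂ)ˣ := ⟨U, Uᴴ, hUU', hUU⟩
  have hUinv : (↑Uu⁻¹ : Matrix (Fin n) (Fin n) ℂ) = Uᴴ := rfl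
  -- diagonalization of A and P
  have hAU : A * U = U * Matrix.diagonal (fun k => (lam k : ℂ)) := by
    ext i k
    have := congrFun (heigA k) i
    simpa [Matrix.mul_apply, Matrix.mulVec, dotProduct, Matrix.diagonal,
      hUdef, mul_comm] using this
  have hPU : P * U = U * Matrix.diagonal μ := by
    ext i k
    have := congrFun (heigP k) i
    simpa [Matrix.mul_apply, Matrix.mulVec, dotProduct, Matrix.diagonal,
      hUdef, mul_comm] using this
  have hAdiag : A = U * Matrix.diagonal (fun k => (lam k : ℂ)) * Uᴴ := by
    calc A = A * (U * Uᴴ) := by rw [hUU', mul_one]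
    _ = (A * U) * Uᴴ := by rw [mul_assoc]
    _ = U * Matrix.diagonal (fun k => (lam k : ℂ)) * Uᴴ := by rw [hAU]
  have hPdiag : P = U * Matrix.diagonal μ * Uᴴ := by
    calc P = P * (U * Uᴴ) := by rw [hUU', mul_one]
    _ = (P * U) * Uᴴ := by rw [mul_assoc]
    _ = U * Matrix.diagonal μ * Uᴴ := by rw [hPU]
  set c : ℂ := -(Complex.I * (t : ℂ)) with hc
  set ε : Fin n → ℂ := fun k => NormedSpace.exp (c * (lam k : ℂ)) with hε
  have hexp : NormedSpace.exp (c • A) = U * Matrix.diagonal ε * Uᴴ := by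
    have h1 : c • A = (Uu : Matrix (Fin n) (Fin n) ℂ) * Matrix.diagonal (fun k => c * (lam k : ℂ)) * (↑Uu⁻¹ : Matrix (Fin n) (Fin n) ℂ) := by
      rw [hUinv]
      show c • A = U * Matrix.diagonal (fun k => c * (lam k : ℂ)) * Uᴴ
      rw [hAdiag]
      have : Matrix.diagonal (fun k => c * (lam k : ℂ))
          = c • Matrix.diagonal (fun k => (lam k : ℂ)) := by
        ext i j
        by_cases h : i = j <;> simp [Matrix.diagonal, h]
      rw [this]
      simp [Matrix.mul_smul, Matrix.smul_mul]
    rw [h1, Matrix.exp_units_conj, Matrix.exp_diagonal, hUinv]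
    congr 1
    show _ * _ = (U : Matrix (Fin n) (Fin n) ℂ) * _
    congr 1
    funext k
    simp [Pi.exp_def, hε]
  -- extract eigenvalue relation
  have key : ∀ k, ε k = γ * μ k := by
    intro k
    have h2 := congrArg (fun v => Uᴴ.mulVec v) hpst
    simp only [hexp, Matrix.mulVec_smul, Matrix.mulVec_mulVec] at h2
    have e1 : Uᴴ * (U * Matrix.diagonal ε * Uᴴ) = Matrix.diagonal ε * Uᴴ := by
      rw [mul_assoc U, ← mul_assoc Uᴴ, hUU, one_mul]
    have e2 : Uᴴ * P = Matrix.diagonal μ * Uᴴ := by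
      rw [hPdiag, mul_assoc U, ← mul_assoc Uᴴ, hUU, one_mul]
    rw [e1] at h2
    have h2' := congrArg (fun v => Uᴴ.mulVec v) hpst
    simp only [hexp, Matrix.mulVec_smul, Matrix.mulVec_mulVec, e1, e2] at h2'
    have h3 := congrFun h2' k
    have h4 : (Matrix.diagonal ε * Uᴴ) k a = γ * ((Matrix.diagonal μ * Uᴴ) k a) := by
      simpa [Matrix.mulVec_single, Pi.smul_apply, smul_eq_mul] using h3
    have h5 : ε k * (starRingEnd ℂ) (z k a) = γ * (μ k * (starRingEnd ℂ) (z k a)) := by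
      simpa [Matrix.mul_apply, Matrix.diagonal, Matrix.conjTranspose_apply, hUdef,
        Finset.mul_sum] using h4
    have hne : (starRingEnd ℂ) (z k a) ≠ 0 := by
      simpa using hsupp k
    exact mul_right_cancel₀ hne (by linear_combination h5)
  refine ⟨γ, hγ, ?_⟩
  have hdiag : Matrix.diagonal ε = γ • Matrix.diagonal μ := by
    ext i j
    by_cases h : i = j <;> simp [Matrix.diagonal, h, key]
  rw [hexp, hdiag, hPdiag]
  simp [Matrix.smul_mul, Matrix.mul_smul]
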